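/- Every hermiticity-preserving, trace-annihilating superoperator L on a finite-dimensional Hilbert space can be written in Lindblad form: there exist real γ_j and operators E_j such that L(ρ) = Σ_j γ_j (E_j ρ E_j† - ½{E_j† E_j, ρ}) for all ρ. -/

import Mathlib

open Matrix

/-- Every hermiticity-preserving, trace-annihilating superoperator on a finite-dimensional
Hilbert space can be written in Lindblad form
`L(ρ) = Σ_j γ_j (E_j ρ E_j† − ½{E_j† E_j, ρ})` with real `γ_j`. -/
theorem hpta_lindblad_form {d : ℕ}
    (L : Matrix (Fin d) (Fin d) ℂ →ₗ[ℂ] Matrix (Fin d) (Fin d) ℂ)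
    (hherm : ∀ M : Matrix (Fin d) (Fin d) ℂ, L Mᴴ = (L M)ᴴ)
    (htr : ∀ M : Matrix (Fin d) (Fin d) ℂ, (L M).trace = 0) :
    ∃ (n : ℕ) (γ : Fin n → ℝ) (E : Fin n → Matrix (Fin d) (Fin d) ℂ),
      ∀ ρ : Matrix (Fin d) (Fin d) ℂ,
        L ρ = ∑ j, (γ j : ℂ) •
          (E j * ρ * (E j)ᴴ
            - (1 / 2 : ℂ) • ((E j)ᴴ * E j * ρ + ρ * ((E j)ᴴ * E j))) := by
  classical
  set C : Matrix (Fin d × Fin d) (Fin d × Fin d) ℂ :=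
    fun p q => L (Matrix.single p.1 q.1 1) p.2 q.2 with hCdef
  have hstdT : ∀ i k : Fin d, (Matrix.single i k (1:ℂ))ᴴ = Matrix.single k i 1 := by
    intro i k
    ext a b
    simp [Matrix.single, conjTranspose_apply, and_comm]
  have hC : C.IsHermitian := by
    ext p q
    have h := congrArg (fun M => M p.2 q.2) (hherm (Matrix.single q.1 p.1 1))
    simp only [hstdT, conjTranspose_apply] at h
    rw [conjTranspose_apply]
    simpa [hCdef, conjTranspose_apply] using h.symm
  set U : Matrix (Fin d × Fin d) (Fin d × Fin d) ℂ := ((hC.eigenvectorUnitary : unitaryGroup (Fin d × Fin d) ℂ) : Matrix (Fin d × Fin d) (Fin d × Fin d) ℂ)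
    with hUdef
  set lam := hC.eigenvalues with hlam
  have hE : ∀ p q, C p q = ∑ m, (lam m : ℂ) * (U p m * star (U q m)) := by
    intro p q
    conv_lhs => rw [hC.spectral_theorem, Unitary.conjStarAlgAut_apply]
    rw [Matrix.mul_apply]
    refine Finset.sum_congr rfl fun m _ => ?_
    rw [Matrix.mul_diagonal]
    simp [star_apply, hUdef]
    ring
  let e : Fin d × Fin d ≃ Fin (d * d) := finProdFinEquiv
  refine ⟨d * d, fun m => lam (e.symm m), fun m => fun j i => U (i, j) (e.symm m), ?_⟩
  set γ : Fin (d*d) → ℝ := fun m => lam (e.symm m)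
  set E : Fin (d*d) → Matrix (Fin d) (Fin d) ℂ := fun m => fun j i => U (i, j) (e.symm m)
    with hEdef
  -- key 1
  have key1 : ∀ ρ : Matrix (Fin d) (Fin d) ℂ,
      L ρ = ∑ m, (γ m : ℂ) • (E m * ρ * (E m)ᴴ) := by
    intro ρ
    have hρ : L ρ = ∑ i, ∑ k, ρ i k • L (Matrix.single i k 1) := by
      conv_lhs => rw [matrix_eq_sum_single ρ]
      rw [map_sum]
      refine Finset.sum_congr rfl fun i _ => ?_
      rw [map_sum]
      refine Finset.sum_congr rfl fun k _ => ?_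
      have : Matrix.single i k (ρ i k) = ρ i k • Matrix.single i k (1:ℂ) := by
        ext a b; simp [Matrix.single]
      rw [this, L.map_smul]
    ext j l
    rw [hρ]
    have lhs_eq : (∑ i, ∑ k, ρ i k • L (Matrix.single i k 1)) j l
        = ∑ i, ∑ k, ρ i k * C (i, j) (k, l) := by
      simp [Matrix.sum_apply, hCdef]
    rw [lhs_eq]
    have rhs_eq : (∑ m, (γ m : ℂ) • (E m * ρ * (E m)ᴴ)) j l
        = ∑ m, (γ m : ℂ) * ∑ k, (∑ i, E m j i * ρ i k) * star (E m l k) := by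
      simp [Matrix.sum_apply, Matrix.mul_apply, conjTranspose_apply]
    rw [rhs_eq]
    calc ∑ i, ∑ k, ρ i k * C (i, j) (k, l)
        = ∑ i, ∑ k, ρ i k * ∑ m : Fin d × Fin d,
            (lam m : ℂ) * (U (i,j) m * star (U (k,l) m)) := by
          refine Finset.sum_congr rfl fun i _ => Finset.sum_congr rfl fun k _ => ?_
          rw [hE]
      _ = ∑ m : Fin d × Fin d, ∑ i, ∑ k,
            ρ i k * ((lam m : ℂ) * (U (i,j) m * star (U (k,l) m))) := by
          simp only [Finset.mul_sum]
          rw [show (∑ i, ∑ k, ∑ m : Fin d × Fin d,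
              ρ i k * ((lam m : ℂ) * (U (i,j) m * star (U (k,l) m))))
            = ∑ i, ∑ m : Fin d × Fin d, ∑ k,
              ρ i k * ((lam m : ℂ) * (U (i,j) m * star (U (k,l) m)))
            from Finset.sum_congr rfl fun i _ => Finset.sum_comm ..]
          exact Finset.sum_comm ..
      _ = ∑ m, (γ m : ℂ) * ∑ k, (∑ i, E m j i * ρ i k) * star (E m l k) := by
          rw [← Equiv.sum_comp e.symm (fun m => ∑ i, ∑ k,
            ρ i k * ((lam m : ℂ) * (U (i,j) m * star (U (k,l) m))))]
          refine Finset.sum_congr rfl fun m _ => ?_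
          simp only [hEdef, Finset.mul_sum, Finset.sum_mul]
          rw [Finset.sum_comm]
          refine Finset.sum_congr rfl fun k _ => Finset.sum_congr rfl fun i _ => ?_
          ring
  -- key 2
  have key2 : (∑ m, (γ m : ℂ) • ((E m)ᴴ * E m)) = 0 := by
    have htr' : ∀ ρ, ((∑ m, (γ m : ℂ) • ((E m)ᴴ * E m)) * ρ).trace = 0 := by
      intro ρ
      have h0 := htr ρ
      rw [key1 ρ] at h0
      calc ((∑ m, (γ m : ℂ) • ((E m)ᴴ * E m)) * ρ).trace
          = ∑ m, (γ m : ℂ) * ((E m)ᴴ * E m * ρ).trace := by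
            rw [Finset.sum_mul]
            simp [Matrix.trace_sum, Matrix.smul_mul, Matrix.trace_smul, smul_eq_mul]
        _ = ∑ m, (γ m : ℂ) * (E m * ρ * (E m)ᴴ).trace := by
            refine Finset.sum_congr rfl fun m _ => ?_
            rw [trace_mul_cycle (E m) ρ ((E m)ᴴ)]
        _ = (∑ m, (γ m : ℂ) • (E m * ρ * (E m)ᴴ)).trace := by
            simp [Matrix.trace_sum, Matrix.trace_smul, smul_eq_mul]
        _ = 0 := h0.symm ▸ rfl
    ext a b
    have h := htr' (Matrix.single b a 1)
    rw [Matrix.trace] at h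
    simpa [Matrix.diag, Matrix.mul_apply, Matrix.single, ite_and, Finset.sum_ite_eq,
      Finset.sum_ite_eq'] using h
  -- conclude
  intro ρ
  have expand : ∑ j, (γ j : ℂ) •
        (E j * ρ * (E j)ᴴ - (1 / 2 : ℂ) • ((E j)ᴴ * E j * ρ + ρ * ((E j)ᴴ * E j)))
      = (∑ j, (γ j : ℂ) • (E j * ρ * (E j)ᴴ))
        - (1 / 2 : ℂ) • ((∑ j, (γ j : ℂ) • ((E j)ᴴ * E j)) * ρ
            + ρ * (∑ j, (γ j : ℂ) • ((E j)ᴴ * E j))) := by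
    simp only [smul_sub]
    rw [Finset.sum_sub_distrib, Finset.sum_mul, Finset.mul_sum, ← Finset.sum_add_distrib,
      Finset.smul_sum]
    congr 1
    refine Finset.sum_congr rfl fun j _ => ?_
    rw [smul_comm ((γ j : ℂ)) ((1:ℂ)/2)]
    congr 1
    rw [smul_add, Matrix.smul_mul, Matrix.mul_smul]
  rw [expand, key2, Matrix.zero_mul, Matrix.mul_zero, add_zero, smul_zero, sub_zero, key1]
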